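/- For every even integer n ≥ 4: 2^{n/2} · C(n, n/2)^{−1} · M(n,4) ≤ RP(n/2) ≤ M(n,4), where C denotes the binomial coefficient. -/

import Mathlib

open SimpleGraph

/-- `G` contains a cycle of length `k` as a subgraph. -/
def ContainsCycleLen {V : Type*} (G : SimpleGraph V) (k : ℕ) : Prop :=
  ∃ (u : V) (w : G.Walk u u), w.IsCycle ∧ w.length = k

/-- `H` is a Hamiltonian path of the complete graph on `Fin n`:
it is the path graph on `n` vertices up to a relabeling of the vertices. -/
def IsHamPathGraph {n : ℕ} (H : SimpleGraph (Fin n)) : Prop :=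
  ∃ σ : Equiv.Perm (Fin n), ∀ a b, H.Adj a b ↔ (pathGraph n).Adj (σ a) (σ b)

/-- The maximum size of a family of Hamiltonian paths of `K_n` that are
pairwise `C_k`-creating. -/
noncomputable def Hnum (n k : ℕ) : ℕ :=
  sSup {m | ∃ F : Finset (SimpleGraph (Fin n)), F.card = m ∧
    (∀ G ∈ F, IsHamPathGraph G) ∧
    ∀ G₁ ∈ F, ∀ G₂ ∈ F, G₁ ≠ G₂ → ContainsCycleLen (G₁ ⊔ G₂) k}

/-- `H` is a perfect matching (as a graph): every vertex has a unique neighbor. -/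
def IsPMGraph {V : Type*} (H : SimpleGraph V) : Prop :=
  ∀ v : V, ∃! w : V, H.Adj v w

/-- The maximum size of a family of perfect matchings of `K_n` that are
pairwise `C_k`-creating. -/
noncomputable def Mnum (n k : ℕ) : ℕ :=
  sSup {m | ∃ F : Finset (SimpleGraph (Fin n)), F.card = m ∧
    (∀ G ∈ F, IsPMGraph G) ∧
    ∀ G₁ ∈ F, ∀ G₂ ∈ F, G₁ ≠ G₂ → ContainsCycleLen (G₁ ⊔ G₂) k}

/-- Two permutations are reversing if some pair of coordinates carries the
same two values in opposite orders. -/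
def Reversing {m : ℕ} (π₁ π₂ : Equiv.Perm (Fin m)) : Prop :=
  ∃ i j : Fin m, i < j ∧ π₁ i = π₂ j ∧ π₁ j = π₂ i

/-- The maximum size of a family of pairwise reversing permutations of `[m]`. -/
noncomputable def RP (m : ℕ) : ℕ :=
  sSup {t | ∃ F : Finset (Equiv.Perm (Fin m)), F.card = t ∧
    ∀ p₁ ∈ F, ∀ p₂ ∈ F, p₁ ≠ p₂ → Reversing p₁ p₂}

lemma cycle4 {V : Type*} (G : SimpleGraph V) {a b c d : V}
    (hab : G.Adj a b) (hbc : G.Adj b c) (hcd : G.Adj c d) (hda : G.Adj d a)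
    (hac : a ≠ c) (hbd : b ≠ d) : ContainsCycleLen G 4 := by
  refine ⟨a, .cons hab (.cons hbc (.cons hcd (.cons hda .nil))), ?_, rfl⟩
  have h1 := hab.ne
  have h2 := hbc.ne
  have h3 := hcd.ne
  have h4 := hda.ne
  constructor
  · constructor
    · constructor
      simp [Walk.edges, Sym2.eq_iff]
      aesop
    · simp
  · simp [Walk.support]
    aesop

lemma cycle4_elim {V : Type*} (G : SimpleGraph V) (h : ContainsCycleLen G 4) :
    ∃ a b c d : V, G.Adj a b ∧ G.Adj b c ∧ G.Adj c d ∧ G.Adj d a ∧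
      a ≠ b ∧ a ≠ c ∧ a ≠ d ∧ b ≠ c ∧ b ≠ d ∧ c ≠ d := by
  obtain ⟨u, w, hc, hl⟩ := h
  cases w with
  | nil => simp at hl
  | cons h1 w =>
  rename_i b
  cases w with
  | nil => simp at hl
  | cons h2 w =>
  rename_i c
  cases w with
  | nil => simp at hl
  | cons h3 w =>
  rename_i d
  cases w with
  | nil => simp at hl
  | cons h4 w =>
  rename_i e
  cases w with
  | nil =>
    have hnd := hc.2
    simp [Walk.support] at hnd
    obtain ⟨⟨hbc, hbd, hbu⟩, ⟨hcd, hcu⟩, hdu⟩ := hnd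
    exact ⟨u, b, c, d, h1, h2, h3, h4,
      h1.ne, fun h => hcu h.symm, fun h => hdu h.symm, hbc, hbd, hcd⟩
  | cons h5 w => simp [Walk.length] at hl


/-- graph from a fixed-point-free involution -/
def grOf {V : Type*} (f : V → V) : SimpleGraph V where
  Adj v w := v ≠ w ∧ f v = w ∧ f w = v
  symm := ⟨fun v w h => ⟨h.1.symm, h.2.2, h.2.1⟩⟩
  loopless := ⟨fun v h => h.1 rfl⟩

lemma grOf_adj {V : Type*} {f : V → V} {v w : V} :
    (grOf f).Adj v w ↔ v ≠ w ∧ f v = w ∧ f w = v := Iff.rfl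

lemma grOf_pm {V : Type*} {f : V → V} (hinv : ∀ v, f (f v) = v)
    (hfp : ∀ v, f v ≠ v) : IsPMGraph (grOf f) := by
  intro v
  refine ⟨f v, ⟨(hfp v).symm, rfl, hinv v⟩, fun w hw => hw.2.1.symm⟩

/-- the partner function of a perfect matching graph -/
noncomputable def pmFun {V : Type*} (H : SimpleGraph V) (h : IsPMGraph H) : V → V :=
  fun v => (h v).choose

lemma pmFun_adj {V : Type*} {H : SimpleGraph V} (h : IsPMGraph H) (v : V) :
    H.Adj v (pmFun H h v) := (h v).choose_spec.1

lemma pmFun_eq {V : Type*} {H : SimpleGraph V} (h : IsPMGraph H) {v w : V}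
    (hw : H.Adj v w) : pmFun H h v = w := ((h v).choose_spec.2 w hw).symm

lemma pmFun_inv {V : Type*} {H : SimpleGraph V} (h : IsPMGraph H) (v : V) :
    pmFun H h (pmFun H h v) = v := pmFun_eq h (pmFun_adj h v).symm

lemma pmFun_ne {V : Type*} {H : SimpleGraph V} (h : IsPMGraph H) (v : V) :
    pmFun H h v ≠ v := fun he => (pmFun_adj h v).ne' he

lemma adj_iff_pmFun {V : Type*} {H : SimpleGraph V} (h : IsPMGraph H) {v w : V} :
    H.Adj v w ↔ pmFun H h v = w :=
  ⟨pmFun_eq h, fun he => he ▸ pmFun_adj h v⟩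

/-- two PM graphs with equal partner functions are equal -/
lemma pm_ext {V : Type*} {H₁ H₂ : SimpleGraph V} (h₁ : IsPMGraph H₁) (h₂ : IsPMGraph H₂)
    (he : pmFun H₁ h₁ = pmFun H₂ h₂) : H₁ = H₂ := by
  ext v w
  rw [adj_iff_pmFun h₁, adj_iff_pmFun h₂, he]


lemma reversing_symm {m : ℕ} {π₁ π₂ : Equiv.Perm (Fin m)} (h : Reversing π₁ π₂) :
    Reversing π₂ π₁ := by
  obtain ⟨i, j, hij, e1, e2⟩ := h
  exact ⟨i, j, hij, e2.symm, e1.symm⟩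

lemma not_reversing_self {m : ℕ} (π : Equiv.Perm (Fin m)) : ¬ Reversing π π := by
  rintro ⟨i, j, hij, e1, -⟩
  exact hij.ne (π.injective e1)

section cp
variable {m n : ℕ}

lemma compl_card (h2 : m + m = n) {A : Finset (Fin n)} (hA : A.card = m) : Aᶜ.card = m := by
  rw [Finset.card_compl, hA, Fintype.card_fin]
  omega

variable (h2 : m + m = n)

/-- the permutation of `Fin m` induced by an involution crossing `A` -/
noncomputable def crossPerm (f : Fin n → Fin n) (hinv : ∀ v, f (f v) = v)
    {A : Finset (Fin n)} (hA : A.card = m) (hcr : ∀ v, v ∈ A ↔ f v ∉ A) :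
    Equiv.Perm (Fin m) where
  toFun i := (Aᶜ.orderIsoOfFin (compl_card h2 hA)).symm
    ⟨f (A.orderIsoOfFin hA i), by
      simp only [Finset.mem_compl]
      exact (hcr _).1 (A.orderIsoOfFin hA i).2⟩
  invFun j := (A.orderIsoOfFin hA).symm
    ⟨f (Aᶜ.orderIsoOfFin (compl_card h2 hA) j), by
      by_contra hc
      have h3 := (hcr (f ((Aᶜ.orderIsoOfFin (compl_card h2 hA)) j))).2
      rw [hinv] at h3
      exact hc (h3 (Finset.mem_compl.1 (Aᶜ.orderIsoOfFin (compl_card h2 hA) j).2))⟩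
  left_inv i := by
    simp only [OrderIso.apply_symm_apply, hinv]
    exact (A.orderIsoOfFin hA).symm_apply_apply i
  right_inv j := by
    simp only [OrderIso.apply_symm_apply, hinv]
    exact (Aᶜ.orderIsoOfFin (compl_card h2 hA)).symm_apply_apply j

lemma crossPerm_spec (f : Fin n → Fin n) (hinv : ∀ v, f (f v) = v)
    {A : Finset (Fin n)} (hA : A.card = m) (hcr : ∀ v, v ∈ A ↔ f v ∉ A) (i : Fin m) :
    ((Aᶜ.orderIsoOfFin (compl_card h2 hA)) (crossPerm h2 f hinv hA hcr i) : Fin n)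
      = f (A.orderIsoOfFin hA i) := by
  simp [crossPerm]


lemma L1 {f g : Fin n → Fin n} (hfinv : ∀ v, f (f v) = v) (hginv : ∀ v, g (g v) = v)
    {A : Finset (Fin n)} (hA : A.card = m)
    (hcf : ∀ v, v ∈ A ↔ f v ∉ A) (hcg : ∀ v, v ∈ A ↔ g v ∉ A)
    {a b c d : Fin n} (ha : a ∈ A) (hac : a ≠ c)
    (e1 : f a = b) (e2 : g b = c) (e3 : f c = d) (e4 : g d = a) :
    Reversing (crossPerm h2 f hfinv hA hcf) (crossPerm h2 g hginv hA hcg) := by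
  have hb : b ∉ A := e1 ▸ (hcf a).1 ha
  have hc : c ∈ A := by
    by_contra hcc
    exact hb ((hcg b).2 (by rw [e2]; exact hcc))
  set iA := A.orderIsoOfFin hA with hiA
  set iB := Aᶜ.orderIsoOfFin (compl_card h2 hA) with hiB
  set π₁ := crossPerm h2 f hfinv hA hcf with hπ₁
  set π₂ := crossPerm h2 g hginv hA hcg with hπ₂
  set i := iA.symm ⟨a, ha⟩ with hi
  set j := iA.symm ⟨c, hc⟩ with hj
  have hij : i ≠ j := by
    intro h
    apply hac
    have := congrArg iA h
    simp only [OrderIso.apply_symm_apply, hi, hj] at this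
    exact congrArg Subtype.val this
  have vA : ∀ (k : Fin m) (x : Fin n) (hx : x ∈ A), k = iA.symm ⟨x, hx⟩ → (iA k : Fin n) = x := by
    rintro k x hx rfl
    simp only [OrderIso.apply_symm_apply]
  have via1 : (iA i : Fin n) = a := vA i a ha hi
  have via2 : (iA j : Fin n) = c := vA j c hc hj
  have s1 : (iB (π₁ i) : Fin n) = b := by
    rw [hπ₁, hiB, crossPerm_spec, ← hiA, via1, e1]
  have s2 : (iB (π₁ j) : Fin n) = d := by
    rw [hπ₁, hiB, crossPerm_spec, ← hiA, via2, e3]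
  have s3 : (iB (π₂ i) : Fin n) = d := by
    rw [hπ₂, hiB, crossPerm_spec, ← hiA, via1]
    rw [← e4, hginv]
  have s4 : (iB (π₂ j) : Fin n) = b := by
    rw [hπ₂, hiB, crossPerm_spec, ← hiA, via2]
    rw [← e2, hginv]
  have q1 : π₁ i = π₂ j := by
    apply iB.injective
    exact Subtype.ext (s1.trans s4.symm)
  have q2 : π₁ j = π₂ i := by
    apply iB.injective
    exact Subtype.ext (s2.trans s3.symm)
  rcases lt_or_gt_of_ne hij with h | h
  · exact ⟨i, j, h, q1, q2⟩
  · exact ⟨j, i, h, q2, q1⟩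

lemma cross_reversing {G₁ G₂ : SimpleGraph (Fin n)} (hp₁ : IsPMGraph G₁) (hp₂ : IsPMGraph G₂)
    {A : Finset (Fin n)} (hA : A.card = m)
    (hc₁ : ∀ v, v ∈ A ↔ pmFun G₁ hp₁ v ∉ A) (hc₂ : ∀ v, v ∈ A ↔ pmFun G₂ hp₂ v ∉ A)
    (hc4 : ContainsCycleLen (G₁ ⊔ G₂) 4) :
    Reversing (crossPerm h2 _ (pmFun_inv hp₁) hA hc₁) (crossPerm h2 _ (pmFun_inv hp₂) hA hc₂) := by
  set f := pmFun G₁ hp₁ with hf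
  set g := pmFun G₂ hp₂ with hg
  obtain ⟨a, b, c, d, e1, e2, e3, e4, hab, hac, had, hbc, hbd, hcd⟩ := cycle4_elim _ hc4
  have finv : ∀ v, f (f v) = v := pmFun_inv hp₁
  have ginv : ∀ v, g (g v) = v := pmFun_inv hp₂
  have d1 : f a = b ∨ g a = b := by
    rcases e1 with h | h
    · exact Or.inl (pmFun_eq hp₁ h)
    · exact Or.inr (pmFun_eq hp₂ h)
  have d2 : f b = c ∨ g b = c := by
    rcases e2 with h | h
    · exact Or.inl (pmFun_eq hp₁ h)
    · exact Or.inr (pmFun_eq hp₂ h)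
  have d3 : f c = d ∨ g c = d := by
    rcases e3 with h | h
    · exact Or.inl (pmFun_eq hp₁ h)
    · exact Or.inr (pmFun_eq hp₂ h)
  have d4 : f d = a ∨ g d = a := by
    rcases e4 with h | h
    · exact Or.inl (pmFun_eq hp₁ h)
    · exact Or.inr (pmFun_eq hp₂ h)
  rcases d1 with p1 | p1
  · -- f a = b
    have p2 : g b = c := by
      rcases d2 with h | h
      · exfalso; rw [← p1, finv] at h; exact hac h
      · exact h
    have p3 : f c = d := by
      rcases d3 with h | h
      · exact h
      · exfalso; rw [← p2, ginv] at h; exact hbd h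
    have p4 : g d = a := by
      rcases d4 with h | h
      · exfalso; rw [← p3, finv] at h; exact hac h.symm
      · exact h
    by_cases haA : a ∈ A
    · exact L1 h2 finv ginv hA hc₁ hc₂ haA hac p1 p2 p3 p4
    · have hbA : b ∈ A := by
        by_contra hbA
        exact haA ((hc₁ a).2 (p1 ▸ hbA))
      have p1' : f a = b := p1
      -- rotated pattern (b,c,d,a) with roles (g,f)
      exact reversing_symm (L1 h2 ginv finv hA hc₂ hc₁ hbA hbd p2 p3 p4 p1)
  · -- g a = b
    have p2 : f b = c := by
      rcases d2 with h | h
      · exact h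
      · exfalso; rw [← p1, ginv] at h; exact hac h
    have p3 : g c = d := by
      rcases d3 with h | h
      · exfalso; rw [← p2, finv] at h; exact hbd h
      · exact h
    have p4 : f d = a := by
      rcases d4 with h | h
      · exact h
      · exfalso; rw [← p3, ginv] at h; exact hac h.symm
    by_cases haA : a ∈ A
    · exact reversing_symm (L1 h2 ginv finv hA hc₂ hc₁ haA hac p1 p2 p3 p4)
    · have hbA : b ∈ A := by
        by_contra hbA
        exact haA ((hc₂ a).2 (p1 ▸ hbA))
      exact L1 h2 finv ginv hA hc₁ hc₂ hbA hbd p2 p3 p4 p1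

open scoped Classical in
lemma count_transversals (hmn : m + m = n) {f : Fin n → Fin n} (hinv : ∀ v, f (f v) = v)
    (hfp : ∀ v, f v ≠ v) :
    2 ^ m ≤ ((Finset.univ : Finset (Fin n)).powersetCard m |>.filter
      (fun A => ∀ v, v ∈ A ↔ f v ∉ A)).card := by
  classical
  have hfinj : Function.Injective f := Function.LeftInverse.injective hinv
  set R : Finset (Fin n) := Finset.univ.filter (fun v => v < f v) with hR
  have hmemR : ∀ v, v ∈ R ↔ v < f v := by
    intro v; simp [hR]
  have hfR : ∀ v, f v ∈ R ↔ v ∉ R := by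
    intro v
    rw [hmemR, hmemR, hinv]
    rcases lt_trichotomy v (f v) with h | h | h
    · constructor
      · intro h'; omega
      · intro h'; exact absurd h h'
    · exact absurd h.symm (hfp v)
    · constructor
      · intro _ h'; omega
      · intro _; exact h
  have hcompl : Rᶜ = R.image f := by
    ext v
    simp only [Finset.mem_compl, Finset.mem_image]
    constructor
    · intro hv
      exact ⟨f v, (hfR v).2 hv, hinv v⟩
    · rintro ⟨w, hw, rfl⟩
      intro hc
      exact ((hfR w).1 hc) hw
  have hRcard : R.card = m := by
    have h1 : Rᶜ.card = R.card := by
      rw [hcompl, Finset.card_image_of_injective _ hfinj]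
    have h2 := Finset.card_compl R
    have h3 := Finset.card_le_univ R
    rw [h1, Fintype.card_fin] at h2
    rw [Fintype.card_fin] at h3
    omega
  set ψ : Finset (Fin n) → Finset (Fin n) := fun S => S ∪ (R \ S).image f with hψ
  have hmemψ : ∀ S ⊆ R, ∀ v, v ∈ ψ S ↔ (v ∈ S ∨ (f v ∈ R ∧ f v ∉ S)) := by
    intro S hS v
    simp only [hψ, Finset.mem_union, Finset.mem_image, Finset.mem_sdiff]
    constructor
    · rintro (h | ⟨w, ⟨hw1, hw2⟩, rfl⟩)
      · exact Or.inl h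
      · exact Or.inr (by rw [hinv]; exact ⟨hw1, hw2⟩)
    · rintro (h | ⟨h1, h2⟩)
      · exact Or.inl h
      · exact Or.inr ⟨f v, ⟨h1, h2⟩, hinv v⟩
  have hcard : ∀ S ⊆ R, (ψ S).card = m := by
    intro S hS
    have hdisj : Disjoint S ((R \ S).image f) := by
      rw [Finset.disjoint_left]
      intro v hv hvi
      obtain ⟨w, hw, rfl⟩ := Finset.mem_image.1 hvi
      exact ((hfR w).1 (hS hv)) (Finset.mem_sdiff.1 hw).1
    have hsc := Finset.card_le_card hS
    rw [hψ]
    rw [Finset.card_union_of_disjoint hdisj, Finset.card_image_of_injective _ hfinj,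
      Finset.card_sdiff_of_subset hS]
    omega
  have hcross : ∀ S ⊆ R, ∀ v, v ∈ ψ S ↔ f v ∉ ψ S := by
    intro S hS v
    rw [hmemψ S hS v, hmemψ S hS (f v), hinv]
    have hv₁ : v ∈ S → v ∈ R := fun h => hS h
    have hv₂ : f v ∈ S → f v ∈ R := fun h => hS h
    have hv₃ := hfR v
    tauto
  have hsub : ∀ S₁ ∈ R.powerset, ∀ S₂ ∈ R.powerset, ψ S₁ = ψ S₂ → S₁ ⊆ S₂ := by
    intro S₁ h₁ S₂ h₂ he v hv
    have h₁' := Finset.mem_powerset.1 h₁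
    have h₂' := Finset.mem_powerset.1 h₂
    have hv' : v ∈ ψ S₂ := he ▸ (hmemψ S₁ h₁' v).2 (Or.inl hv)
    rcases (hmemψ S₂ h₂' v).1 hv' with h | ⟨h, -⟩
    · exact h
    · exact absurd (h₁' hv) ((hfR v).1 h)
  calc 2 ^ m = R.powerset.card := by rw [Finset.card_powerset, hRcard]
    _ ≤ _ := by
        apply Finset.card_le_card_of_injOn ψ
        · intro S hSp
          have hS := Finset.mem_powerset.1 hSp
          rw [Finset.mem_coe, Finset.mem_filter, Finset.mem_powersetCard_univ]
          exact ⟨hcard S hS, hcross S hS⟩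
        · intro S₁ h₁ S₂ h₂ he
          exact le_antisymm (hsub S₁ h₁ S₂ h₂ he) (hsub S₂ h₂ S₁ h₁ he.symm)

open scoped Classical in
lemma perA (hmn : m + m = n) {A : Finset (Fin n)} (hA : A.card = m)
    {F : Finset (SimpleGraph (Fin n))} (hpm : ∀ G ∈ F, IsPMGraph G)
    (hcyc : ∀ G₁ ∈ F, ∀ G₂ ∈ F, G₁ ≠ G₂ → ContainsCycleLen (G₁ ⊔ G₂) 4) :
    (F.filter (fun M => ∀ v w, M.Adj v w → (v ∈ A ↔ w ∉ A))).card ≤ RP m := by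
  classical
  set φ : SimpleGraph (Fin n) → Equiv.Perm (Fin m) := fun M =>
    if h : ∃ hp : IsPMGraph M, ∀ v, v ∈ A ↔ pmFun M hp v ∉ A then
      crossPerm hmn _ (pmFun_inv h.choose) hA h.choose_spec else 1 with hφ
  set filt := F.filter (fun M => ∀ v w, M.Adj v w → (v ∈ A ↔ w ∉ A)) with hfilt
  have hex : ∀ M ∈ filt, ∃ hp : IsPMGraph M, ∀ v, v ∈ A ↔ pmFun M hp v ∉ A := by
    intro M hM
    rw [hfilt, Finset.mem_filter] at hM
    have hp := hpm M hM.1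
    exact ⟨hp, fun v => hM.2 v _ (pmFun_adj hp v)⟩
  have hrev : ∀ M₁ ∈ filt, ∀ M₂ ∈ filt, M₁ ≠ M₂ → Reversing (φ M₁) (φ M₂) := by
    intro M₁ h₁ M₂ h₂ hne
    have he₁ := hex M₁ h₁
    have he₂ := hex M₂ h₂
    rw [hφ]
    simp only [dif_pos he₁, dif_pos he₂]
    have hm₁ := (Finset.mem_filter.1 h₁).1
    have hm₂ := (Finset.mem_filter.1 h₂).1
    exact cross_reversing hmn he₁.choose he₂.choose hA he₁.choose_spec he₂.choose_spec
      (hcyc M₁ hm₁ M₂ hm₂ hne)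
  have hinj : Set.InjOn φ filt := by
    intro M₁ h₁ M₂ h₂ he
    by_contra hne
    have := hrev M₁ h₁ M₂ h₂ hne
    rw [he] at this
    exact not_reversing_self _ this
  have hmem : (filt.image φ).card ∈ {t | ∃ F : Finset (Equiv.Perm (Fin m)), F.card = t ∧
      ∀ p₁ ∈ F, ∀ p₂ ∈ F, p₁ ≠ p₂ → Reversing p₁ p₂} := by
    refine ⟨filt.image φ, rfl, ?_⟩
    intro p₁ hp₁ p₂ hp₂ hpne
    obtain ⟨M₁, hM₁, rfl⟩ := Finset.mem_image.1 hp₁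
    obtain ⟨M₂, hM₂, rfl⟩ := Finset.mem_image.1 hp₂
    exact hrev M₁ hM₁ M₂ hM₂ (fun h => hpne (by rw [h]))
  have hbdd : BddAbove {t | ∃ F : Finset (Equiv.Perm (Fin m)), F.card = t ∧
      ∀ p₁ ∈ F, ∀ p₂ ∈ F, p₁ ≠ p₂ → Reversing p₁ p₂} := by
    refine ⟨Fintype.card (Equiv.Perm (Fin m)), ?_⟩
    rintro t ⟨F', rfl, -⟩
    exact F'.card_le_univ
  calc filt.card = (filt.image φ).card := (Finset.card_image_of_injOn hinj).symm
    _ ≤ RP m := le_csSup hbdd hmem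

end cp

section part2
variable {m n : ℕ} (h2 : m + m = n)

def sumEq : Fin m ⊕ Fin m ≃ Fin n := finSumFinEquiv.trans (finCongr h2)

def kFun (π : Equiv.Perm (Fin m)) : Fin m ⊕ Fin m → Fin m ⊕ Fin m
  | .inl i => .inr (π i)
  | .inr j => .inl (π⁻¹ j)

def pFun (π : Equiv.Perm (Fin m)) : Fin n → Fin n :=
  (sumEq h2) ∘ kFun π ∘ (sumEq h2).symm

lemma pFun_apply_l (π : Equiv.Perm (Fin m)) (i : Fin m) :
    pFun h2 π (sumEq h2 (.inl i)) = sumEq h2 (.inr (π i)) := by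
  simp [pFun, kFun]

lemma pFun_apply_r (π : Equiv.Perm (Fin m)) (j : Fin m) :
    pFun h2 π (sumEq h2 (.inr j)) = sumEq h2 (.inl (π⁻¹ j)) := by
  simp [pFun, kFun]

lemma pFun_inv (π : Equiv.Perm (Fin m)) (v : Fin n) : pFun h2 π (pFun h2 π v) = v := by
  obtain ⟨s, rfl⟩ := (sumEq h2).surjective v
  cases s with
  | inl i => rw [pFun_apply_l, pFun_apply_r]; simp
  | inr j => rw [pFun_apply_r, pFun_apply_l]; simp

lemma pFun_ne (π : Equiv.Perm (Fin m)) (v : Fin n) : pFun h2 π v ≠ v := by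
  obtain ⟨s, rfl⟩ := (sumEq h2).surjective v
  cases s with
  | inl i => rw [pFun_apply_l]; simp [(sumEq h2).injective.ne_iff]
  | inr j => rw [pFun_apply_r]; simp [(sumEq h2).injective.ne_iff]


def permGraph (π : Equiv.Perm (Fin m)) : SimpleGraph (Fin n) := grOf (pFun h2 π)

lemma permGraph_pm (π : Equiv.Perm (Fin m)) : IsPMGraph (permGraph h2 π) :=
  grOf_pm (pFun_inv h2 π) (pFun_ne h2 π)

lemma permGraph_adj (π : Equiv.Perm (Fin m)) (i j : Fin m) :
    (permGraph h2 π).Adj (sumEq h2 (.inl i)) (sumEq h2 (.inr j)) ↔ π i = j := by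
  rw [permGraph, grOf_adj]
  constructor
  · rintro ⟨-, he, -⟩
    rw [pFun_apply_l] at he
    simpa using (sumEq h2).injective he
  · rintro rfl
    refine ⟨by simp [(sumEq h2).injective.ne_iff], ?_, ?_⟩
    · rw [pFun_apply_l]
    · rw [pFun_apply_r]; simp

lemma permGraph_inj : Function.Injective (permGraph h2) := by
  intro π₁ π₂ he
  refine Equiv.ext fun i => ?_
  have := (permGraph_adj h2 π₁ i (π₁ i)).2 rfl
  rw [he, permGraph_adj] at this
  exact this.symm

lemma reversing_c4 {π₁ π₂ : Equiv.Perm (Fin m)} (hr : Reversing π₁ π₂) :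
    ContainsCycleLen (permGraph h2 π₁ ⊔ permGraph h2 π₂) 4 := by
  obtain ⟨i, j, hij, e1, e2⟩ := hr
  have hne : i ≠ j := hij.ne
  refine cycle4 _ (a := sumEq h2 (.inl i)) (b := sumEq h2 (.inr (π₁ i)))
    (c := sumEq h2 (.inl j)) (d := sumEq h2 (.inr (π₁ j))) ?_ ?_ ?_ ?_ ?_ ?_
  · exact Or.inl ((permGraph_adj h2 π₁ i _).2 rfl)
  · exact Or.inr ((permGraph_adj h2 π₂ j _).2 e1.symm).symm
  · exact Or.inl ((permGraph_adj h2 π₁ j _).2 rfl)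
  · exact Or.inr (((permGraph_adj h2 π₂ i (π₁ j)).2 e2.symm).symm)
  · simp [(sumEq h2).injective.ne_iff, hne]
  · simp [(sumEq h2).injective.ne_iff, π₁.injective.ne_iff, hne]

end part2

/-- `2^(n/2) C(n,n/2)⁻¹ M(n,4) ≤ RP(n/2) ≤ M(n,4)` for even `n ≥ 4`. -/
theorem stmt_17 (n : ℕ) (hn : 4 ≤ n) (hne : Even n) :
    2 ^ (n / 2) * Mnum n 4 ≤ n.choose (n / 2) * RP (n / 2) ∧
    RP (n / 2) ≤ Mnum n 4 := by
  classical
  obtain ⟨k, hk⟩ := hne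
  set m := n / 2 with hmdef
  have hmn : m + m = n := by omega
  -- the two sSup sets
  have hbddR : BddAbove {t | ∃ F : Finset (Equiv.Perm (Fin m)), F.card = t ∧
      ∀ p₁ ∈ F, ∀ p₂ ∈ F, p₁ ≠ p₂ → Reversing p₁ p₂} := by
    refine ⟨Fintype.card (Equiv.Perm (Fin m)), ?_⟩
    rintro t ⟨F', rfl, -⟩
    exact F'.card_le_univ
  have hneR : {t | ∃ F : Finset (Equiv.Perm (Fin m)), F.card = t ∧
      ∀ p₁ ∈ F, ∀ p₂ ∈ F, p₁ ≠ p₂ → Reversing p₁ p₂}.Nonempty :=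
    ⟨0, ∅, by simp, by simp⟩
  have hbddM : BddAbove {t | ∃ F : Finset (SimpleGraph (Fin n)), F.card = t ∧
      (∀ G ∈ F, IsPMGraph G) ∧
      ∀ G₁ ∈ F, ∀ G₂ ∈ F, G₁ ≠ G₂ → ContainsCycleLen (G₁ ⊔ G₂) 4} := by
    refine ⟨Fintype.card (SimpleGraph (Fin n)), ?_⟩
    rintro t ⟨F', rfl, -⟩
    exact F'.card_le_univ
  have hneM : {t | ∃ F : Finset (SimpleGraph (Fin n)), F.card = t ∧
      (∀ G ∈ F, IsPMGraph G) ∧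
      ∀ G₁ ∈ F, ∀ G₂ ∈ F, G₁ ≠ G₂ → ContainsCycleLen (G₁ ⊔ G₂) 4}.Nonempty :=
    ⟨0, ∅, by simp, by simp, by simp⟩
  constructor
  · -- part 1
    obtain ⟨F, hFcard, hFpm, hFcyc⟩ := Nat.sSup_mem hneM hbddM
    set 𝒜 := Finset.powersetCard m (Finset.univ : Finset (Fin n)) with h𝒜
    have key1 : ∀ M ∈ F, 2 ^ m ≤
        (𝒜.filter (fun A => ∀ v w, M.Adj v w → (v ∈ A ↔ w ∉ A))).card := by
      intro M hM
      have hp := hFpm M hM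
      have heq : 𝒜.filter (fun A => ∀ v, v ∈ A ↔ pmFun M hp v ∉ A)
          = 𝒜.filter (fun A => ∀ v w, M.Adj v w → (v ∈ A ↔ w ∉ A)) := by
        apply Finset.filter_congr
        intro A _
        constructor
        · intro h v w hadj
          rw [← pmFun_eq hp hadj]
          exact h v
        · intro h v
          exact h v _ (pmFun_adj hp v)
      rw [← heq]
      have := count_transversals hmn (pmFun_inv hp) (pmFun_ne hp)
      convert this using 2
    calc 2 ^ m * Mnum n 4 = F.card * 2 ^ m := by rw [Mnum, ← hFcard, mul_comm]
      _ ≤ ∑ M ∈ F, (𝒜.filter (fun A => ∀ v w, M.Adj v w → (v ∈ A ↔ w ∉ A))).card := by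
          have := Finset.card_nsmul_le_sum F
            (fun M => (𝒜.filter (fun A => ∀ v w, M.Adj v w → (v ∈ A ↔ w ∉ A))).card)
            (2 ^ m) key1
          simpa [smul_eq_mul] using this
      _ = ∑ A ∈ 𝒜, (F.filter (fun M => ∀ v w, M.Adj v w → (v ∈ A ↔ w ∉ A))).card := by
          simp_rw [Finset.card_filter]
          exact Finset.sum_comm
      _ ≤ 𝒜.card * RP m := by
          have := Finset.sum_le_card_nsmul 𝒜
            (fun A => (F.filter (fun M => ∀ v w, M.Adj v w → (v ∈ A ↔ w ∉ A))).card)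
            (RP m)
            (fun A hA => perA hmn (Finset.mem_powersetCard_univ.1 hA) hFpm hFcyc)
          simpa [smul_eq_mul] using this
      _ = n.choose m * RP m := by
          rw [h𝒜, Finset.card_powersetCard, Finset.card_univ, Fintype.card_fin]
  · -- part 2
    obtain ⟨FR, hFRcard, hFRrev⟩ := Nat.sSup_mem hneR hbddR
    refine le_csSup hbddM ⟨FR.image (permGraph hmn), ?_, ?_, ?_⟩
    · rw [Finset.card_image_of_injective _ (permGraph_inj hmn), hFRcard, RP]
    · intro G hG
      obtain ⟨π, -, rfl⟩ := Finset.mem_image.1 hG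
      exact permGraph_pm hmn π
    · intro G₁ hG₁ G₂ hG₂ hne
      obtain ⟨π₁, hπ₁, rfl⟩ := Finset.mem_image.1 hG₁
      obtain ⟨π₂, hπ₂, rfl⟩ := Finset.mem_image.1 hG₂
      exact reversing_c4 hmn (hFRrev π₁ hπ₁ π₂ hπ₂ (fun h => hne (by rw [h])))
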